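/- Let q be a prime power and t ≥ 1 an integer with q^t ≥ 9 a square, and suppose there are sequences of positive reals (g_s) and nonnegative reals (B_s) with g_s → ∞, g_{s+1}/g_s → 1, and t·B_s/g_s → q^{t/2} - 1. For n ∈ ℕ let s(n) be the least s with t·B_s - g_s ≥ 2n + 8 (which exists for large n). Then g_{s(n)} = 2n/(q^{t/2}-2) + o(n) and B_{s(n)} = (2n/t)(1 + 1/(q^{t/2}-2)) + o(n) as n → ∞. -/

import Mathlib

open Filter Asymptotics

/-- Asymptotic analysis of the choice of step in the Shimura-curve family:
`g_{s(n)} = 2n/(q^{t/2}-2) + o(n)` and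
`B_{s(n)} = (2n/t)(1 + 1/(q^{t/2}-2)) + o(n)`. -/
theorem stmt19 (q t : ℕ) (hq : IsPrimePow q) (ht : 1 ≤ t)
    (hsq : ∃ m : ℕ, q ^ t = m ^ 2) (hqt : 9 ≤ q ^ t)
    (g B : ℕ → ℝ) (hgpos : ∀ s, 0 < g s) (hBnn : ∀ s, 0 ≤ B s)
    (hginf : Tendsto g atTop atTop)
    (hgratio : Tendsto (fun s => g (s + 1) / g s) atTop (nhds 1))
    (hB : Tendsto (fun s => (t : ℝ) * B s / g s) atTop
      (nhds (Real.sqrt ((q : ℝ) ^ t) - 1)))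
    (sn : ℕ → ℕ) (N₀ : ℕ)
    (hsn : ∀ n ≥ N₀,
      IsLeast {s : ℕ | 1 ≤ s ∧ (t : ℝ) * B s - g s ≥ 2 * n + 8} (sn n)) :
    (fun n : ℕ => g (sn n) - 2 * n / (Real.sqrt ((q : ℝ) ^ t) - 2))
        =o[atTop] (fun n : ℕ => (n : ℝ)) ∧
    (fun n : ℕ => B (sn n)
        - (2 * n / t) * (1 + 1 / (Real.sqrt ((q : ℝ) ^ t) - 2)))
        =o[atTop] (fun n : ℕ => (n : ℝ)) := by
  set c : ℝ := Real.sqrt ((q : ℝ) ^ t) with hcdef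
  have hc3 : (3 : ℝ) ≤ c := by
    have h9 : (9 : ℝ) ≤ (q : ℝ) ^ t := by exact_mod_cast hqt
    have : Real.sqrt 9 ≤ c := Real.sqrt_le_sqrt h9
    rwa [show (9 : ℝ) = 3 ^ 2 by norm_num, Real.sqrt_sq (by norm_num : (0:ℝ) ≤ 3)] at this
  set d : ℝ := c - 2 with hddef
  have hdpos : (0 : ℝ) < d := by simp only [hddef]; linarith
  have hdne : d ≠ 0 := ne_of_gt hdpos
  set f : ℕ → ℝ := fun s => (t : ℝ) * B s - g s with hfdef
  have hgne : ∀ s, g s ≠ 0 := fun s => (hgpos s).ne'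
  -- Step 1: f s / g s → d
  have h1 : Tendsto (fun s => f s / g s) atTop (nhds d) := by
    have heq : ∀ s, f s / g s = (t : ℝ) * B s / g s - 1 := by
      intro s
      rw [hfdef, sub_div, div_self (hgne s)]
    have h := hB.sub (tendsto_const_nhds (x := (1 : ℝ)))
    have : Tendsto (fun s => (t : ℝ) * B s / g s - 1) atTop (nhds (c - 1 - 1)) := h
    have hval : c - 1 - 1 = d := by rw [hddef]; ring
    rw [hval] at this
    exact this.congr fun s => (heq s).symm
  -- eventually f s > 0
  have hfpos : ∀ᶠ s in atTop, 0 < f s := by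
    have := h1.eventually_const_lt (show (0:ℝ) < d from hdpos)
    filter_upwards [this] with s hs
    have : 0 < f s / g s := hs
    by_contra hcon
    push_neg at hcon
    have : f s / g s ≤ 0 := div_nonpos_of_nonpos_of_nonneg hcon (hgpos s).le
    linarith
  obtain ⟨S₀, hS₀⟩ := eventually_atTop.mp hfpos
  -- f → atTop
  have hftop : Tendsto f atTop atTop := by
    have h := Tendsto.pos_mul_atTop hdpos h1 hginf
    refine h.congr fun s => ?_
    exact div_mul_cancel₀ (f s) (hgne s)
  -- sn → atTop
  have hsntop : Tendsto sn atTop atTop := by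
    rw [tendsto_atTop]
    intro S
    set M : ℝ := (Finset.range (S + 1)).sup' ⟨0, by simp⟩ f with hM
    obtain ⟨N₁, hN₁⟩ := exists_nat_gt M
    filter_upwards [eventually_ge_atTop (max N₀ N₁)] with n hn
    have hnN₀ : n ≥ N₀ := le_trans (le_max_left _ _) hn
    have hnN₁ : n ≥ N₁ := le_trans (le_max_right _ _) hn
    have hmem := (hsn n hnN₀).1
    by_contra hcon
    push_neg at hcon
    have hsnS : sn n ∈ Finset.range (S + 1) := by
      simp only [Finset.mem_range]; omega
    have hle : f (sn n) ≤ M := Finset.le_sup' f hsnS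
    have hge : f (sn n) ≥ 2 * n + 8 := hmem.2
    have : (N₁ : ℝ) ≤ n := by exact_mod_cast hnN₁
    have hn0 : (0:ℝ) ≤ n := Nat.cast_nonneg n
    linarith
  -- f (s+1) / f s → 1
  have hr : Tendsto (fun s => f (s + 1) / f s) atTop (nhds 1) := by
    have ha : Tendsto (fun s => f (s + 1) / g (s + 1)) atTop (nhds d) :=
      h1.comp (tendsto_add_atTop_nat 1)
    have hb : Tendsto (fun s => g s / f s) atTop (nhds d⁻¹) := by
      have := h1.inv₀ hdne
      refine this.congr fun s => ?_
      rw [inv_div]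
    have h := (ha.mul hgratio).mul hb
    have hval : d * 1 * d⁻¹ = 1 := by field_simp
    rw [hval] at h
    refine Tendsto.congr' ?_ h
    filter_upwards [hfpos] with s hs
    have key : ∀ a b c e : ℝ, b ≠ 0 → c ≠ 0 → e ≠ 0 → a / b * (b / c) * (c / e) = a / e := by
      intros a b c e hb hc he; field_simp
    exact key _ _ _ _ (hgne (s+1)) (hgne s) hs.ne'
  -- sn n - 1 → atTop and composition
  have hsm1 : Tendsto (fun n => sn n - 1) atTop atTop :=
    (tendsto_sub_atTop_nat 1).comp hsntop
  have hrcomp : Tendsto (fun n => f (sn n - 1 + 1) / f (sn n - 1)) atTop (nhds 1) :=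
    hr.comp hsm1
  -- key squeeze: f (sn n) / (2n+8) → 1
  have hu : Tendsto (fun n => f (sn n) / (2 * (n:ℝ) + 8)) atTop (nhds 1) := by
    have hlow : ∀ᶠ n in atTop, (1:ℝ) ≤ f (sn n) / (2 * (n:ℝ) + 8) := by
      filter_upwards [eventually_ge_atTop N₀] with n hn
      have hge : f (sn n) ≥ 2 * n + 8 := (hsn n hn).1.2
      have hpos : (0:ℝ) < 2 * n + 8 := by positivity
      rw [le_div_iff₀ hpos]; linarith
    have hhigh : ∀ᶠ n in atTop,
        f (sn n) / (2 * (n:ℝ) + 8) ≤ f (sn n - 1 + 1) / f (sn n - 1) := by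
      filter_upwards [eventually_ge_atTop N₀, hsntop.eventually_ge_atTop (S₀ + 2)]
        with n hn hsn2
      have hmem := hsn n hn
      have hsnge : sn n ≥ S₀ + 2 := hsn2
      have heq : sn n - 1 + 1 = sn n := by omega
      rw [heq]
      have hfp1 : 0 < f (sn n - 1) := hS₀ _ (by omega)
      have hfp : 0 < f (sn n) := hS₀ _ (by omega)
      have hnotmem : sn n - 1 ∉ {s : ℕ | 1 ≤ s ∧ (t : ℝ) * B s - g s ≥ 2 * n + 8} := by
        intro hmem'
        have := hmem.2 hmem'
        omega
      have hlt : f (sn n - 1) < 2 * n + 8 := by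
        by_contra hcon
        push_neg at hcon
        exact hnotmem ⟨by omega, hcon⟩
      gcongr
    exact tendsto_of_tendsto_of_tendsto_of_le_of_le' tendsto_const_nhds hrcomp hlow hhigh
  -- f (sn n) / n → 2
  have hfn : Tendsto (fun n => f (sn n) / (n:ℝ)) atTop (nhds 2) := by
    have hq8 : Tendsto (fun n : ℕ => (2 * (n:ℝ) + 8) / n) atTop (nhds 2) := by
      have h8 : Tendsto (fun n : ℕ => (8:ℝ) / n) atTop (nhds 0) :=
        tendsto_const_div_atTop_nhds_zero_nat 8
      have h := (tendsto_const_nhds (x := (2:ℝ))).add h8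
      rw [add_zero] at h
      refine Tendsto.congr' ?_ h
      filter_upwards [eventually_ge_atTop 1] with n hn
      have hne : (n:ℝ) ≠ 0 := by positivity
      field_simp
    have h := hu.mul hq8
    rw [one_mul] at h
    refine Tendsto.congr' ?_ h
    filter_upwards [eventually_ge_atTop 1] with n hn
    have hne : (n:ℝ) ≠ 0 := by positivity
    have hne2 : (2 * (n:ℝ) + 8) ≠ 0 := by positivity
    field_simp
  -- g (sn n) / n → 2 / d
  have hgn : Tendsto (fun n => g (sn n) / (n:ℝ)) atTop (nhds (2 / d)) := by
    have hginv : Tendsto (fun n => g (sn n) / f (sn n)) atTop (nhds d⁻¹) := by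
      have hb : Tendsto (fun s => g s / f s) atTop (nhds d⁻¹) := by
        have := h1.inv₀ hdne
        refine this.congr fun s => ?_
        rw [inv_div]
      exact hb.comp hsntop
    have h := hginv.mul hfn
    have hval : d⁻¹ * 2 = 2 / d := by field_simp
    rw [hval] at h
    refine Tendsto.congr' ?_ h
    filter_upwards [hsntop.eventually_ge_atTop (S₀ + 1)] with n hn
    have hfp : f (sn n) ≠ 0 := (hS₀ _ (by omega)).ne'
    field_simp
  -- B (sn n) / n → (2 + 2/d) / t
  have htpos : (0:ℝ) < t := by exact_mod_cast ht
  have htne : (t:ℝ) ≠ 0 := ne_of_gt htpos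
  have hBn : Tendsto (fun n => B (sn n) / (n:ℝ)) atTop (nhds ((2 + 2 / d) / t)) := by
    have h := (hfn.add hgn).div_const (t:ℝ)
    refine Tendsto.congr' ?_ h
    filter_upwards [eventually_ge_atTop 1] with n hn
    have hne : (n:ℝ) ≠ 0 := by positivity
    have hBeq : B (sn n) = (f (sn n) + g (sn n)) / t := by
      rw [hfdef]; field_simp; ring
    rw [hBeq, ← add_div, div_div, div_div, mul_comm]
  -- conversion to o-notation
  have hne0 : ∀ᶠ n : ℕ in atTop, ((n:ℝ) = 0 → False) := by
    filter_upwards [eventually_ge_atTop 1] with n hn h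
    have : (n:ℝ) ≠ 0 := by positivity
    exact this h
  constructor
  · rw [isLittleO_iff_tendsto' (by filter_upwards [hne0] with n hn h; exact absurd h hn)]
    have h := hgn.sub (tendsto_const_nhds (x := 2 / d))
    rw [sub_self] at h
    refine Tendsto.congr' ?_ h
    filter_upwards [eventually_ge_atTop 1] with n hn
    have hne : (n:ℝ) ≠ 0 := by positivity
    field_simp
  · rw [isLittleO_iff_tendsto' (by filter_upwards [hne0] with n hn h; exact absurd h hn)]
    have h := hBn.sub (tendsto_const_nhds (x := (2 + 2 / d) / t))
    rw [sub_self] at h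
    refine Tendsto.congr' ?_ h
    filter_upwards [eventually_ge_atTop 1] with n hn
    have hne : (n:ℝ) ≠ 0 := by positivity
    field_simp
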